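/- For every C* > 0 there exists a constant C > 0, depending only on C*, such that the following holds. Let κ = conv{x,y,z} ⊂ ℝ³ be a C*-regular triangle with unit normal n̄(κ), and let ν₁, ν₂ ∈ ℝ³ be unit vectors with ν₁·(y−x) = 0, ν₂·(z−y) = 0, and ν₁·n̄(κ) ≥ 0. Then |ν₁ − n̄(κ)| ≤ C·|ν₁ − ν₂|. -/

import Mathlib

open scoped RealInnerProductSpace

noncomputable section

/-- Euclidean 3-space. -/
abbrev E3 := EuclideanSpace ℝ (Fin 3)

/-- The cross product on `ℝ³`. -/
def cross3 (u v : E3) : E3 :=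
  (WithLp.equiv 2 (Fin 3 → ℝ)).symm
    ![u 1 * v 2 - u 2 * v 1, u 2 * v 0 - u 0 * v 2, u 0 * v 1 - u 1 * v 0]

/-- The diameter of the triangle `conv{x,y,z}`. -/
def diam3 (x y z : E3) : ℝ := max ‖y - x‖ (max ‖z - x‖ ‖z - y‖)

/-- The area of the triangle `conv{x,y,z}`. -/
def area3 (x y z : E3) : ℝ := ‖cross3 (y - x) (z - x)‖ / 2

/-- The unit normal `n̄(κ)` of the triangle `κ = conv{x,y,z}`. -/
def unitNormal (x y z : E3) : E3 :=
  ‖cross3 (y - x) (z - x)‖⁻¹ • cross3 (y - x) (z - x)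

lemma cross_ident (ν u v : E3) :
    ‖ν‖^2 * ‖u‖^2 * ‖cross3 u v‖^2 =
      ⟪ν, u⟫^2 * ‖cross3 u v‖^2 + ⟪ν, cross3 u v⟫^2 * ‖u‖^2
        + (⟪u, v⟫ * ⟪ν, u⟫ - ‖u‖^2 * ⟪ν, v⟫)^2 := by
  have h : ∀ a : E3, ‖a‖^2 = ⟪a,a⟫ := fun a => (real_inner_self_eq_norm_sq a).symm
  simp only [h]
  simp only [cross3, PiLp.inner_apply, RCLike.inner_apply, starRingEnd_apply, star_trivial,
    Fin.sum_univ_three, WithLp.equiv_symm_apply, PiLp.toLp_apply, Matrix.cons_val_zero, Matrix.cons_val_one,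
    Matrix.head_cons, Matrix.cons_val_two, Matrix.tail_cons]
  ring

lemma arith_step (Cstar d A t T s : ℝ) (hC : 0 < Cstar) (hd : 0 < d)
    (hAlb : 2 * Cstar * d ^ 2 ≤ A) (ht0 : 0 ≤ t) (htA : t ≤ A)
    (hT2A : T ^ 2 * A = 2 * A - 2 * t) (hkey : A ^ 2 - t ^ 2 ≤ d ^ 4 * s ^ 2)
    (hT : 0 ≤ T) (hs : 0 ≤ s) : T ≤ 1 / Cstar * s := by
  have hA : 0 < A := lt_of_lt_of_le (by positivity) hAlb
  have h5 : T ^ 2 * A ^ 2 ≤ 2 * (d ^ 4 * s ^ 2) := by nlinarith [sq_nonneg T]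
  have h7 : T ^ 2 * (4 * Cstar ^ 2 * d ^ 4) ≤ 2 * (d ^ 4 * s ^ 2) := by
    have hA2 : 4 * Cstar ^ 2 * d ^ 4 ≤ A ^ 2 := by
      have h := pow_le_pow_left₀ (by positivity : (0:ℝ) ≤ 2 * Cstar * d ^ 2) hAlb 2
      calc 4 * Cstar ^ 2 * d ^ 4 = (2 * Cstar * d ^ 2) ^ 2 := by ring
        _ ≤ A ^ 2 := h
    nlinarith [sq_nonneg T]
  have h8 : (Cstar * T) ^ 2 ≤ s ^ 2 := by nlinarith [pow_pos hd 4, sq_nonneg T, sq_nonneg s]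
  have h9 : Cstar * T ≤ s := by nlinarith [mul_nonneg hC.le hT]
  rw [div_mul_eq_mul_div, one_mul, le_div_iff₀ hC]
  linarith

/-- a unit edge director (unit vector orthogonal to an edge,
pointing to the same side as the triangle normal) is close to the triangle
normal in terms of its difference from a unit edge director of a second edge. -/
theorem stmt_1 (Cstar : ℝ) (hCstar : 0 < Cstar) :
    ∃ C > (0 : ℝ), ∀ (x y z ν₁ ν₂ : E3),
      ¬ Collinear ℝ ({x, y, z} : Set E3) →
      Cstar * diam3 x y z ^ 2 ≤ area3 x y z →
      ‖ν₁‖ = 1 → ‖ν₂‖ = 1 →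
      ⟪ν₁, y - x⟫ = 0 →
      ⟪ν₂, z - y⟫ = 0 →
      0 ≤ ⟪ν₁, unitNormal x y z⟫ →
      ‖ν₁ - unitNormal x y z‖ ≤ C * ‖ν₁ - ν₂‖ := by
  refine ⟨1/Cstar, by positivity, fun x y z ν₁ ν₂ hcol harea h1 h2 ho1 ho2 hpos => ?_⟩
  simp only [area3] at harea
  set d := diam3 x y z with hddef
  set u := y - x with hu
  set v := z - x with hv
  set w := z - y with hw
  set N := cross3 u v with hNdef
  set s := ‖ν₁ - ν₂‖ with hsdef
  have hxy : x ≠ y := by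
    rintro rfl
    exact hcol (by rw [Set.insert_idem]; exact collinear_pair ℝ x z)
  have hupos : 0 < ‖u‖ := by
    rw [hu, norm_pos_iff]
    exact sub_ne_zero.mpr (Ne.symm hxy)
  have hu_d : ‖u‖ ≤ d := le_max_left _ _
  have hw_d : ‖w‖ ≤ d := le_trans (le_max_right _ _) (le_max_right _ _)
  have hdpos : 0 < d := lt_of_lt_of_le hupos hu_d
  have hAlb : 2 * Cstar * d ^ 2 ≤ ‖N‖ := by linarith
  have hApos : 0 < ‖N‖ := lt_of_lt_of_le (by positivity) hAlb
  have hn : unitNormal x y z = ‖N‖⁻¹ • N := rfl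
  have hnnorm : ‖unitNormal x y z‖ = 1 := by
    rw [hn, norm_smul, norm_inv, norm_norm, inv_mul_cancel₀ hApos.ne']
  have ha : ⟪ν₁, unitNormal x y z⟫ = ‖N‖⁻¹ * ⟪ν₁, N⟫ := by
    rw [hn, real_inner_smul_right]
  set t := ⟪ν₁, N⟫ with htdef
  set T := ‖ν₁ - unitNormal x y z‖ with hTdef
  have ht0 : 0 ≤ t := by
    have h := mul_nonneg hApos.le (ha ▸ hpos)
    rwa [← mul_assoc, mul_inv_cancel₀ hApos.ne', one_mul] at h
  have htA : t ≤ ‖N‖ := by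
    have := real_inner_le_norm ν₁ N
    rwa [h1, one_mul] at this
  have hT2A : T ^ 2 * ‖N‖ = 2 * ‖N‖ - 2 * t := by
    have hsq : T ^ 2 = 2 - 2 * (‖N‖⁻¹ * t) := by
      rw [hTdef, norm_sub_sq_real, h1, hnnorm, ha]; ring
    rw [hsq]
    field_simp
  -- the key identity
  have hvw : ⟪ν₁, v⟫ = ⟪ν₁ - ν₂, w⟫ := by
    have hv' : v = u + w := by rw [hu, hw, hv]; abel
    rw [hv', inner_add_right, ho1, zero_add, inner_sub_left, ho2, sub_zero]
  set q := ⟪ν₁ - ν₂, w⟫ with hqdef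
  have hid := cross_ident ν₁ u v
  rw [h1, ho1, hvw] at hid
  have hAt : ‖N‖ ^ 2 - t ^ 2 = ‖u‖ ^ 2 * q ^ 2 := by
    have h2' : (‖u‖ ^ 2 : ℝ) ≠ 0 := by positivity
    apply mul_left_cancel₀ h2'
    linear_combination hid
  have hq : q ^ 2 ≤ s ^ 2 * ‖w‖ ^ 2 := by
    have h := abs_real_inner_le_norm (ν₁ - ν₂) w
    have h2 := pow_le_pow_left₀ (abs_nonneg _) h 2
    rwa [sq_abs, mul_pow] at h2
  have hkey : ‖N‖ ^ 2 - t ^ 2 ≤ d ^ 4 * s ^ 2 := by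
    rw [hAt]
    have h1' : ‖u‖ ^ 2 * q ^ 2 ≤ ‖u‖ ^ 2 * (s ^ 2 * ‖w‖ ^ 2) :=
      mul_le_mul_of_nonneg_left hq (by positivity)
    have h2' : ‖u‖ ^ 2 ≤ d ^ 2 := pow_le_pow_left₀ (norm_nonneg u) hu_d 2
    have h3' : ‖w‖ ^ 2 ≤ d ^ 2 := pow_le_pow_left₀ (norm_nonneg w) hw_d 2
    calc ‖u‖ ^ 2 * q ^ 2 ≤ ‖u‖ ^ 2 * (s ^ 2 * ‖w‖ ^ 2) := h1'
      _ ≤ d ^ 2 * (s ^ 2 * ‖w‖ ^ 2) := mul_le_mul_of_nonneg_right h2' (by positivity)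
      _ ≤ d ^ 2 * (s ^ 2 * d ^ 2) :=
          mul_le_mul_of_nonneg_left (mul_le_mul_of_nonneg_left h3' (by positivity)) (by positivity)
      _ = d ^ 4 * s ^ 2 := by ring
  exact arith_step Cstar d ‖N‖ t T s hCstar hdpos hAlb ht0 htA hT2A hkey
    (norm_nonneg _) (norm_nonneg _)
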